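/- Let $(a_t)_{t \geq 0}$, $(\delta_t)_{t \geq 0}$, $(y_t)_{t \geq 0}$ be sequences of nonnegative real numbers and $b > 0$ be a real number. Assume $a_t \leq 1$ for all sufficiently large $t$, $\sum_t a_t = +\infty$, $\sum_t \delta_t < +\infty$, and $y_{t+1} \leq (1 - a_t)^b\, y_t + \delta_t$ for all $t$. Then $\lim_{t \to \infty} y_t = 0$. -/
import Mathlib


open Filter

theorem stmt_4 (a δ y : ℕ → ℝ) (b : ℝ) (hb : 0 < b)
    (ha0 : ∀ t, 0 ≤ a t) (hδ0 : ∀ t, 0 ≤ δ t) (hy0 : ∀ t, 0 ≤ y t)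
    (ha1 : ∀ᶠ t in atTop, a t ≤ 1)
    (ha_div : ¬ Summable a)
    (hδ : Summable δ)
    (hrec : ∀ t, y (t + 1) ≤ (1 - a t) ^ b * y t + δ t) :
    Tendsto y atTop (nhds 0) := by
  rw [Metric.tendsto_atTop]
  intro ε hε
  obtain ⟨N0, hN0⟩ := eventually_atTop.mp ha1
  -- choose N ≥ N0 with tail sum of δ < ε/2
  have htail : Tendsto (fun i => ∑' k, δ (k + i)) atTop (nhds 0) :=
    tendsto_sum_nat_add δ
  have hev : ∀ᶠ i in atTop, (∑' k, δ (k + i)) < ε / 2 ∧ N0 ≤ i := by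
    filter_upwards [htail.eventually (gt_mem_nhds (by linarith : (0:ℝ) < ε/2)),
      eventually_ge_atTop N0] with i h1 h2 using ⟨h1, h2⟩
  obtain ⟨N, hN1, hN2⟩ := hev.exists
  -- basic facts
  have hfac : ∀ i, 0 ≤ (1 - a (N + i)) ^ b ∧ (1 - a (N + i)) ^ b ≤ 1 := by
    intro i
    have h1 : a (N + i) ≤ 1 := hN0 _ (le_trans hN2 (Nat.le_add_right _ _))
    have h0 : 0 ≤ 1 - a (N + i) := by linarith
    exact ⟨Real.rpow_nonneg h0 b, Real.rpow_le_one h0 (by linarith [ha0 (N+i)]) hb.le⟩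
  -- key recursion bound
  have key : ∀ k, y (N + k) ≤ (∏ i ∈ Finset.range k, (1 - a (N + i)) ^ b) * y N
      + ∑ i ∈ Finset.range k, δ (N + i) := by
    intro k
    induction k with
    | zero => simp
    | succ k ih =>
      have h1 := hrec (N + k)
      have hP : 0 ≤ ∏ i ∈ Finset.range k, (1 - a (N + i)) ^ b :=
        Finset.prod_nonneg fun i _ => (hfac i).1
    
      have hS : 0 ≤ ∑ i ∈ Finset.range k, δ (N + i) :=
        Finset.sum_nonneg fun i _ => hδ0 _
      have h2 : y (N + (k + 1)) ≤ (1 - a (N + k)) ^ b *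
          ((∏ i ∈ Finset.range k, (1 - a (N + i)) ^ b) * y N
            + ∑ i ∈ Finset.range k, δ (N + i)) + δ (N + k) := by
        have : N + (k + 1) = (N + k) + 1 := by ring
        rw [this]
        calc y ((N + k) + 1) ≤ (1 - a (N + k)) ^ b * y (N + k) + δ (N + k) := h1
          _ ≤ _ := by
            have := mul_le_mul_of_nonneg_left ih (hfac k).1
            linarith
      rw [Finset.prod_range_succ, Finset.sum_range_succ]
      have h3 : (1 - a (N + k)) ^ b * (∑ i ∈ Finset.range k, δ (N + i))
          ≤ ∑ i ∈ Finset.range k, δ (N + i) := by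
        nlinarith [(hfac k).1, (hfac k).2]
      calc y (N + (k + 1)) ≤ _ := h2
        _ ≤ _ := by ring_nf; nlinarith [(hfac k).1, (hfac k).2]
  -- product bound by exponential
  have hprod : ∀ k, (∏ i ∈ Finset.range k, (1 - a (N + i)) ^ b)
      ≤ Real.exp (-(b * ∑ i ∈ Finset.range k, a (N + i))) := by
    intro k
    calc (∏ i ∈ Finset.range k, (1 - a (N + i)) ^ b)
        ≤ ∏ i ∈ Finset.range k, Real.exp (-(b * a (N + i))) := by
          apply Finset.prod_le_prod (fun i _ => (hfac i).1)
          intro i _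
          have h1 : a (N + i) ≤ 1 := hN0 _ (le_trans hN2 (Nat.le_add_right _ _))
          have h0 : 0 ≤ 1 - a (N + i) := by linarith
          have hle : 1 - a (N + i) ≤ Real.exp (-(a (N + i))) := by
            have := Real.add_one_le_exp (-(a (N + i)))
            linarith
          calc (1 - a (N + i)) ^ b ≤ (Real.exp (-(a (N + i)))) ^ b :=
                Real.rpow_le_rpow h0 hle hb.le
            _ = Real.exp (-(b * a (N + i))) := by
                rw [← Real.exp_mul]; ring_nf
      _ = Real.exp (-(b * ∑ i ∈ Finset.range k, a (N + i))) := by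
          rw [← Real.exp_sum]
          congr 1
          rw [Finset.mul_sum]
          simp [Finset.sum_neg_distrib]
  -- partial sums of a diverge
  have hasum : Tendsto (fun k => ∑ i ∈ Finset.range k, a (N + i)) atTop atTop := by
    have hns : ¬ Summable (fun i => a (N + i)) := by
      intro h
      apply ha_div
      have : Summable (fun i => a (i + N)) := by
        apply h.congr; intro i; rw [Nat.add_comm]
      exact (summable_nat_add_iff N).mp this
    exact (not_summable_iff_tendsto_nat_atTop_of_nonneg (fun i => ha0 (N + i))).mp hns
  -- exp term tends to 0
  have hexp : Tendsto (fun k => Real.exp (-(b * ∑ i ∈ Finset.range k, a (N + i))) * y N)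
      atTop (nhds 0) := by
    have h1 : Tendsto (fun k => -(b * ∑ i ∈ Finset.range k, a (N + i))) atTop atBot :=
      tendsto_neg_atTop_atBot.comp (hasum.const_mul_atTop hb)
    have h2 := (Real.tendsto_exp_atBot.comp h1).mul_const (y N)
    simpa using h2
  obtain ⟨K, hK⟩ := (hexp.eventually (gt_mem_nhds (by linarith : (0:ℝ) < ε/2))).exists_forall_of_atTop
  refine ⟨N + K, fun n hn => ?_⟩
  obtain ⟨k, rfl⟩ := Nat.exists_eq_add_of_le (le_trans (Nat.le_add_right N K) hn)
  have hkK : K ≤ k := by omega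
  have h1 := key k
  have h2 : (∏ i ∈ Finset.range k, (1 - a (N + i)) ^ b) * y N < ε / 2 := by
    calc (∏ i ∈ Finset.range k, (1 - a (N + i)) ^ b) * y N
        ≤ Real.exp (-(b * ∑ i ∈ Finset.range k, a (N + i))) * y N :=
          mul_le_mul_of_nonneg_right (hprod _) (hy0 N)
      _ < ε / 2 := hK _ hkK
  have h3 : ∑ i ∈ Finset.range k, δ (N + i) < ε / 2 := by
    have hsum : Summable (fun i => δ (i + N)) := (summable_nat_add_iff N).mpr hδ
    calc ∑ i ∈ Finset.range k, δ (N + i)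
        = ∑ i ∈ Finset.range k, δ (i + N) := by
          apply Finset.sum_congr rfl; intro i _; rw [Nat.add_comm]
      _ ≤ ∑' i, δ (i + N) := Summable.sum_le_tsum _ (fun i _ => hδ0 _) hsum
      _ < ε / 2 := hN1
  rw [Real.dist_eq, sub_zero, abs_of_nonneg (hy0 _)]
  linarith
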